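/- Let X be a quasi-category. Then two morphisms α, β in X with the same source x and target y represent the same morphism in the homotopy category hC(X) if and only if there exists a 2-simplex h of X with d₂h = α, d₁h = β, and d₀h = s₀y; moreover this relation is an equivalence relation on the set of 1-simplices from x to y. -/

import Mathlib

open CategoryTheory Simplicial

/-- Two 1-simplices `α`, `β` of a simplicial set `X` (with common source and common
target `y`) are homotopic if there is a 2-simplex `h` with `d₂ h = α`, `d₁ h = β` and
`d₀ h = s₀ y`. -/
def QCHomotopic (X : SSet) (y : X _⦋0⦌) (α β : X _⦋1⦌) : Prop :=
  ∃ h : X _⦋2⦌, X.δ 2 h = α ∧ X.δ 1 h = β ∧ X.δ 0 h = X.σ 0 y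

section
open CategoryTheory Simplicial SimplexCategory

namespace QCAux

/-- Factor a map missing `k` through the face `δ k`. -/
def fac {n : ℕ} {m : SimplexCategory} (g : m ⟶ ⦋n+1⦌) (k : Fin (n+2)) : m ⟶ ⦋n⦌ :=
  g ≫ SimplexCategory.σ (Fin.predAbove 0 k)

lemma fac_comp {n : ℕ} {m m' : SimplexCategory} (φ : m' ⟶ m) (g : m ⟶ ⦋n+1⦌) (k : Fin (n+2)) :
    fac (φ ≫ g) k = φ ≫ fac g k := by
  simp [fac]

lemma fac_toOrderHom {n : ℕ} {m : SimplexCategory} (g : m ⟶ ⦋n+1⦌) (k : Fin (n+2))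
    (l : Fin (m.len + 1)) :
    (fac g k).toOrderHom l = (Fin.predAbove 0 k).predAbove (g.toOrderHom l) := rfl

lemma spec_pt3 : ∀ (k v : Fin 4), v ≠ k →
    (SimplexCategory.δ k).toOrderHom ((Fin.predAbove 0 k).predAbove v) = v := by decide

lemma spec_pt2 : ∀ (k v : Fin 3), v ≠ k →
    (SimplexCategory.δ k).toOrderHom ((Fin.predAbove 0 k).predAbove v) = v := by decide

lemma fac_spec3 {m : SimplexCategory} (g : m ⟶ ⦋3⦌) (k : Fin 4)
    (h : ∀ l, g.toOrderHom l ≠ k) : fac g k ≫ SimplexCategory.δ k = g := by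
  ext l : 3
  exact spec_pt3 k _ (h l)

lemma fac_spec2 {m : SimplexCategory} (g : m ⟶ ⦋2⦌) (k : Fin 3)
    (h : ∀ l, g.toOrderHom l ≠ k) : fac g k ≫ SimplexCategory.δ k = g := by
  ext l : 3
  exact spec_pt2 k _ (h l)

lemma miss_pt : ∀ (k : Fin 4) (j : Fin 3), j.castSucc < k → ∀ v : Fin 4,
    v ≠ j.castSucc → v ≠ k → (Fin.predAbove 0 k).predAbove v ≠ j := by decide

end QCAux

namespace QCAux

variable {X : SSet} {i : Fin 4} (F : ∀ j : Fin 4, j ≠ i → X _⦋2⦌)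

section
variable (H : ∀ (j : Fin 3) (k : Fin 4) (_ : j.castSucc < k) (hj : j.castSucc ≠ i)
    (hk : k ≠ i) (hk0 : k ≠ 0), X.δ (k.pred hk0) (F j.castSucc hj) = X.δ j (F k hk))

include H in
lemma key' {m : SimplexCategory} (g : m ⟶ ⦋3⦌) (j k : Fin 4) (hjk : j < k)
    (hj : j ≠ i) (hk : k ≠ i)
    (hgj : ∀ l, g.toOrderHom l ≠ j) (hgk : ∀ l, g.toOrderHom l ≠ k) :
    X.map (fac g j).op (F j hj) = X.map (fac g k).op (F k hk) := by
  obtain ⟨j', rfl⟩ : ∃ j'' : Fin 3, j''.castSucc = j :=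
    ⟨j.castPred (Fin.ne_last_of_lt hjk), Fin.castSucc_castPred _ _⟩
  have hk0 : k ≠ 0 := fun h => by subst h; exact absurd hjk (by omega)
  have hr : ∀ l, (fac g k).toOrderHom l ≠ j' := by
    intro l
    rw [fac_toOrderHom]
    exact miss_pt k j' hjk _ (hgj l) (hgk l)
  set h := fac (fac g k) j' with hh
  have h1 : h ≫ SimplexCategory.δ j' = fac g k := fac_spec2 _ _ hr
  have h2 : fac g k ≫ SimplexCategory.δ k = g := fac_spec3 _ _ hgk
  have h3 : fac g j'.castSucc ≫ SimplexCategory.δ j'.castSucc = g := fac_spec3 _ _ hgj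
  have hle : j' ≤ k.pred hk0 := by
    have := hjk
    simp only [Fin.lt_def, Fin.le_def, Fin.coe_pred, Fin.coe_castSucc] at this ⊢
    omega
  have hsq : SimplexCategory.δ j' ≫ SimplexCategory.δ k
      = SimplexCategory.δ (k.pred hk0) ≫ SimplexCategory.δ j'.castSucc := by
    have := SimplexCategory.δ_comp_δ (n := 1) (i := j') (j := k.pred hk0) hle
    rwa [Fin.succ_pred] at this
  have h4 : fac g j'.castSucc = h ≫ SimplexCategory.δ (k.pred hk0) := by
    have heq : (fac g j'.castSucc) ≫ SimplexCategory.δ j'.castSucc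
        = (h ≫ SimplexCategory.δ (k.pred hk0)) ≫ SimplexCategory.δ j'.castSucc := by
      rw [h3, Category.assoc, ← hsq, ← Category.assoc, h1, h2]
    exact (cancel_mono (SimplexCategory.δ j'.castSucc)).mp heq
  have h5 : fac g k = h ≫ SimplexCategory.δ j' := h1.symm
  rw [h4, h5, op_comp, op_comp, FunctorToTypes.map_comp_apply, FunctorToTypes.map_comp_apply]
  exact congrArg (X.map h.op) (H j' k hjk hj hk hk0)

include H in
lemma key {m : SimplexCategory} (g : m ⟶ ⦋3⦌) (j k : Fin 4)
    (hj : j ≠ i) (hk : k ≠ i)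
    (hgj : ∀ l, g.toOrderHom l ≠ j) (hgk : ∀ l, g.toOrderHom l ≠ k) :
    X.map (fac g j).op (F j hj) = X.map (fac g k).op (F k hk) := by
  rcases lt_trichotomy j k with h | rfl | h
  · exact key' F H g j k h hj hk hgj hgk
  · rfl
  · exact (key' F H g k j h hk hj hgk hgj).symm

end

end QCAux

namespace QCAux

lemma horn_missing {i : Fin 4} {m : SimplexCategoryᵒᵖ} (a : (Λ[3, i] : SSet).obj m) :
    ∃ j : Fin 4, ¬j = i ∧ ∀ l, ((SSet.stdSimplex.objEquiv) a.1).toOrderHom l ≠ j := by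
  obtain ⟨a, ha⟩ := a
  obtain ⟨f, rfl⟩ := ((SSet.stdSimplex.objEquiv)).symm.surjective a
  rw [SSet.mem_horn_iff] at ha
  simp [← Set.univ_subset_iff, Set.subset_def, SSet.stdSimplex.asOrderHom, not_or] at ha
  exact ha

universe u
variable {X : SSet.{u}} {i : Fin 4} (F : ∀ j : Fin 4, j ≠ i → X _⦋2⦌)
variable (H : ∀ (j : Fin 3) (k : Fin 4) (_ : j.castSucc < k) (hj : j.castSucc ≠ i)
    (hk : k ≠ i) (hk0 : k ≠ 0), X.δ (k.pred hk0) (F j.castSucc hj) = X.δ j (F k hk))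

/-- The horn morphism determined by the face data `F`. -/
noncomputable def hornHom (H : ∀ (j : Fin 3) (k : Fin 4) (_ : j.castSucc < k)
    (hj : j.castSucc ≠ i) (hk : k ≠ i) (hk0 : k ≠ 0),
    X.δ (k.pred hk0) (F j.castSucc hj) = X.δ j (F k hk)) :
    (Λ[3, i] : SSet) ⟶ X where
  app m := TypeCat.ofHom fun a =>
    X.map (fac ((SSet.stdSimplex.objEquiv) a.1) (horn_missing a).choose).op
      (F _ (horn_missing a).choose_spec.1)
  naturality m m' φ := by
    ext a
    show X.map (fac ((SSet.stdSimplex.objEquiv) (((Λ[3, i] : SSet)).map φ a).1)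
        (horn_missing _).choose).op (F _ (horn_missing _).choose_spec.1)
      = X.map φ (X.map (fac ((SSet.stdSimplex.objEquiv) a.1)
          (horn_missing a).choose).op (F _ (horn_missing a).choose_spec.1))
    rw [key F H ((SSet.stdSimplex.objEquiv) (((Λ[3, i] : SSet)).map φ a).1)
      (horn_missing ((Λ[3, i] : SSet).map φ a)).choose (horn_missing a).choose
      (horn_missing _).choose_spec.1 (horn_missing a).choose_spec.1
      (horn_missing _).choose_spec.2 (fun l => (horn_missing a).choose_spec.2 _)]
    have e2 : fac ((SSet.stdSimplex.objEquiv) (((Λ[3, i] : SSet)).map φ a).1)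
        (horn_missing a).choose
        = φ.unop ≫ fac ((SSet.stdSimplex.objEquiv) a.1) (horn_missing a).choose :=
      fac_comp _ _ _
    rw [e2, op_comp, FunctorToTypes.map_comp_apply]
    rfl

lemma hornHom_face (H : ∀ (j : Fin 3) (k : Fin 4) (_ : j.castSucc < k)
    (hj : j.castSucc ≠ i) (hk : k ≠ i) (hk0 : k ≠ 0),
    X.δ (k.pred hk0) (F j.castSucc hj) = X.δ j (F k hk)) (j : Fin 4) (hj : j ≠ i) :
    (hornHom F H).app (Opposite.op ⦋2⦌) (SSet.horn.face.{u} i j hj) = F j hj := by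
  have hmiss : ∀ l, (SimplexCategory.δ j).toOrderHom l ≠ j := fun l => Fin.succAbove_ne j l
  show X.map (fac ((SSet.stdSimplex.objEquiv) (SSet.horn.face.{u} i j hj).1)
      (horn_missing _).choose).op (F _ (horn_missing _).choose_spec.1) = F j hj
  rw [key F H ((SSet.stdSimplex.objEquiv) (SSet.horn.face.{u} i j hj).1)
    (horn_missing _).choose j (horn_missing _).choose_spec.1 hj
    (horn_missing _).choose_spec.2 hmiss]
  have hid : fac ((SSet.stdSimplex.objEquiv) (SSet.horn.face.{u} i j hj).1) j
      = 𝟙 _ := by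
    have h1 : fac (SimplexCategory.δ j) j ≫ SimplexCategory.δ j = SimplexCategory.δ j :=
      fac_spec3 _ _ hmiss
    have h2 : (𝟙 (⦋2⦌ : SimplexCategory)) ≫ SimplexCategory.δ j = SimplexCategory.δ j := by simp
    exact (cancel_mono (SimplexCategory.δ j)).mp (h1.trans h2.symm)
  rw [hid, op_id, FunctorToTypes.map_id_apply]

include H in
lemma fill [SSet.Quasicategory X] (h0 : 0 < i) (h3 : i < Fin.last 3) :
    ∃ s : X _⦋3⦌, ∀ (j : Fin 4) (hj : j ≠ i), X.δ j s = F j hj := by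
  obtain ⟨σ, hσ⟩ := SSet.Quasicategory.hornFilling h0 h3 (hornHom F H)
  refine ⟨SSet.yonedaEquiv σ, fun j hj => ?_⟩
  rw [← hornHom_face F H j hj, hσ, ← SSet.stdSimplex.yonedaEquiv_δ_comp, ← SSet.horn.ι_ι (i := i) j hj,
    Category.assoc, SSet.yonedaEquiv_comp, SSet.horn.yonedaEquiv_ι]

end QCAux

end

/-- in a quasi-category `X`, the relation "there exists a 2-simplex `h` with
`d₂ h = α`, `d₁ h = β`, `d₀ h = s₀ y`" is an equivalence relation (reflexive, symmetric and
transitive) on the set of 1-simplices with fixed source `x` and target `y`; it is the relation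
of representing the same morphism in the homotopy category. -/
theorem stmt17 (X : SSet) [SSet.Quasicategory X] (x y : X _⦋0⦌) :
    (∀ α : X _⦋1⦌, X.δ 1 α = x → X.δ 0 α = y → QCHomotopic X y α α) ∧
    (∀ α β : X _⦋1⦌, X.δ 1 α = x → X.δ 0 α = y → X.δ 1 β = x → X.δ 0 β = y →
      QCHomotopic X y α β → QCHomotopic X y β α) ∧
    (∀ α β γ : X _⦋1⦌, X.δ 1 α = x → X.δ 0 α = y → X.δ 1 β = x → X.δ 0 β = y →
      X.δ 1 γ = x → X.δ 0 γ = y →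
      QCHomotopic X y α β → QCHomotopic X y β γ → QCHomotopic X y α γ) := by
  have e21 : ∀ z : X _⦋1⦌, X.δ 2 (X.σ 1 z) = z :=
    fun z => types_congr_hom (X.δ_comp_σ_succ (i := 1)) z
  have e11 : ∀ z : X _⦋1⦌, X.δ 1 (X.σ 1 z) = z :=
    fun z => types_congr_hom (X.δ_comp_σ_self (i := 1)) z
  have e01 : ∀ z : X _⦋1⦌, X.δ 0 (X.σ 1 z) = X.σ 0 (X.δ 0 z) :=
    fun z => types_congr_hom (X.δ_comp_σ_of_le (i := 0) (j := 0) (by decide)) z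
  have e00 : ∀ z : X _⦋1⦌, X.δ 0 (X.σ 0 z) = z :=
    fun z => types_congr_hom (X.δ_comp_σ_self (i := 0)) z
  have e10 : ∀ z : X _⦋1⦌, X.δ 1 (X.σ 0 z) = z :=
    fun z => types_congr_hom (X.δ_comp_σ_succ (i := 0)) z
  have e20 : ∀ z : X _⦋1⦌, X.δ 2 (X.σ 0 z) = X.σ 0 (X.δ 1 z) :=
    fun z => types_congr_hom (X.δ_comp_σ_of_gt (i := 1) (j := 0) (by decide)) z
  have f10 : ∀ z : X _⦋0⦌, X.δ 1 (X.σ 0 z) = z :=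
    fun z => types_congr_hom (X.δ_comp_σ_succ (i := 0)) z
  refine ⟨fun α h1 h0 => ⟨X.σ 1 α, e21 α, e11 α, by rw [e01 α, h0]⟩, ?_, ?_⟩
  · -- symmetry
    rintro α β hα1 hα0 hβ1 hβ0 ⟨T, hT2, hT1, hT0⟩
    set F : ∀ j : Fin 4, j ≠ (1 : Fin 4) → X _⦋2⦌ :=
      fun j _ => ![X.σ 0 (X.σ 0 y), X.σ 0 (X.σ 0 y), X.σ 1 α, T] j with hF
    have H : ∀ (j : Fin 3) (k : Fin 4) (_ : j.castSucc < k) (hj : j.castSucc ≠ (1 : Fin 4))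
        (hk : k ≠ (1 : Fin 4)) (hk0 : k ≠ 0),
        X.δ (k.pred hk0) (F j.castSucc hj) = X.δ j (F k hk) := by
      intro j k hjk hj hk hk0
      fin_cases j <;> fin_cases k <;>
        first
        | exact absurd hjk (by decide)
        | exact absurd (by decide) hj
        | exact absurd (by decide) hk
        | exact absurd (by decide) hk0
        | exact show X.δ 1 (X.σ 0 (X.σ 0 y)) = X.δ 0 (X.σ 1 α) by rw [e10, e01, hα0]
        | exact show X.δ 2 (X.σ 0 (X.σ 0 y)) = X.δ 0 T by rw [e20, f10, hT0]
        | exact show X.δ 2 (X.σ 1 α) = X.δ 2 T by rw [e21, hT2]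
    obtain ⟨s, hs⟩ := QCAux.fill F H (by decide) (by decide)
    refine ⟨X.δ 1 s, ?_, ?_, ?_⟩
    · rw [show X.δ 2 (X.δ 1 s) = X.δ 1 (X.δ 3 s) from
        (types_congr_hom (X.δ_comp_δ (n := 1) (i := 1) (j := 2) (by decide)) s).symm,
        hs 3 (by decide)]
      show X.δ 1 T = β
      rw [hT1]
    · rw [show X.δ 1 (X.δ 1 s) = X.δ 1 (X.δ 2 s) from
        (types_congr_hom (X.δ_comp_δ (n := 1) (i := 1) (j := 1) (by decide)) s).symm,
        hs 2 (by decide)]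
      show X.δ 1 (X.σ 1 α) = α
      rw [e11]
    · rw [show X.δ 0 (X.δ 1 s) = X.δ 0 (X.δ 0 s) from
        types_congr_hom (X.δ_comp_δ (n := 1) (i := 0) (j := 0) (by decide)) s,
        hs 0 (by decide)]
      show X.δ 0 (X.σ 0 (X.σ 0 y)) = X.σ 0 y
      rw [e00]
  · -- transitivity
    rintro α β γ hα1 hα0 hβ1 hβ0 hγ1 hγ0 ⟨T₁, hT12, hT11, hT10⟩ ⟨T₂, hT22, hT21, hT20⟩
    set F : ∀ j : Fin 4, j ≠ (2 : Fin 4) → X _⦋2⦌ :=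
      fun j _ => ![X.σ 0 (X.σ 0 y), T₂, X.σ 0 (X.σ 0 y), T₁] j with hF
    have H : ∀ (j : Fin 3) (k : Fin 4) (_ : j.castSucc < k) (hj : j.castSucc ≠ (2 : Fin 4))
        (hk : k ≠ (2 : Fin 4)) (hk0 : k ≠ 0),
        X.δ (k.pred hk0) (F j.castSucc hj) = X.δ j (F k hk) := by
      intro j k hjk hj hk hk0
      fin_cases j <;> fin_cases k <;>
        first
        | exact absurd hjk (by decide)
        | exact absurd (by decide) hj
        | exact absurd (by decide) hk
        | exact absurd (by decide) hk0
        | exact show X.δ 0 (X.σ 0 (X.σ 0 y)) = X.δ 0 T₂ by rw [e00, hT20]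
        | exact show X.δ 2 (X.σ 0 (X.σ 0 y)) = X.δ 0 T₁ by rw [e20, f10, hT10]
        | exact show X.δ 2 T₂ = X.δ 1 T₁ by rw [hT22, hT11]
    obtain ⟨s, hs⟩ := QCAux.fill F H (by decide) (by decide)
    refine ⟨X.δ 2 s, ?_, ?_, ?_⟩
    · rw [show X.δ 2 (X.δ 2 s) = X.δ 2 (X.δ 3 s) from
        (types_congr_hom (X.δ_comp_δ (n := 1) (i := 2) (j := 2) (by decide)) s).symm,
        hs 3 (by decide)]
      show X.δ 2 T₁ = α
      rw [hT12]
    · rw [show X.δ 1 (X.δ 2 s) = X.δ 1 (X.δ 1 s) from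
        types_congr_hom (X.δ_comp_δ (n := 1) (i := 1) (j := 1) (by decide)) s,
        hs 1 (by decide)]
      show X.δ 1 T₂ = γ
      rw [hT21]
    · rw [show X.δ 0 (X.δ 2 s) = X.δ 1 (X.δ 0 s) from
        types_congr_hom (X.δ_comp_δ (n := 1) (i := 0) (j := 1) (by decide)) s,
        hs 0 (by decide)]
      show X.δ 1 (X.σ 0 (X.σ 0 y)) = X.σ 0 y
      rw [e10]
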